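/- generate2 soundness: For a valid directed policy G = (V,E), the stateful policy (V, E, (filterACS G M e) ∩ (filterIFS G M e)) satisfies both the IFS compliance condition (all IFS invariants hold on its α-image) and the ACS compliance condition (⋃ get_offending_flows (getACS M) of its α-image is contained in backflows(E_σ) \ E). -/

import Mathlib

def backflows {α : Type*} (X : Set (α × α)) : Set (α × α) :=
  {e | (e.2, e.1) ∈ X}

def offending_flows {α : Type*} (m : Set α → Set (α × α) → Prop)
    (V : Set α) (E : Set (α × α)) : Set (Set (α × α)) :=
  {F | F ⊆ E ∧ ¬ m V E ∧ m V (E \ F) ∧ ∀ e ∈ F, ¬ m V ((E \ F) ∪ {e})}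

def get_offending_flows {α : Type*} (M : Set (Set α → Set (α × α) → Prop))
    (V : Set α) (E : Set (α × α)) : Set (Set (α × α)) :=
  ⋃ m ∈ M, offending_flows m V E

inductive Strategy : Type
  | IFS : Strategy
  | ACS : Strategy

structure SecurityInvariant (α : Type*) where
  pred : Set α → Set (α × α) → Prop
  strat : Strategy

/-- the predicates of the IFS-tagged invariants -/
def getIFS {α : Type*} (M : Set (SecurityInvariant α)) :
    Set (Set α → Set (α × α) → Prop) :=
  {f | ∃ m ∈ M, m.strat = Strategy.IFS ∧ f = m.pred}

/-- the predicates of the ACS-tagged invariants -/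
def getACS {α : Type*} (M : Set (SecurityInvariant α)) :
    Set (Set α → Set (α × α) → Prop) :=
  {f | ∃ m ∈ M, m.strat = Strategy.ACS ∧ f = m.pred}

open Classical in
/-- greedy IFS filter; list accumulators are read as sets via `{x | x ∈ ·}` -/
noncomputable def filterIFS {α : Type*} (V : Set α) (E : Set (α × α))
    (M : Set (SecurityInvariant α)) :
    List (α × α) → List (α × α) → List (α × α)
  | a, [] => a
  | a, e :: es =>
    if ∀ m ∈ getIFS M,
        m V (E ∪ {x | x ∈ e :: a} ∪ backflows {x | x ∈ e :: a})
    then filterIFS V E M (e :: a) es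
    else filterIFS V E M a es

open Classical in
/-- greedy ACS filter -/
noncomputable def filterACS {α : Type*} (V : Set α) (E : Set (α × α))
    (M : Set (SecurityInvariant α)) :
    List (α × α) → List (α × α) → List (α × α)
  | a, [] => a
  | a, e :: es =>
    if e ∉ backflows E ∧
        ∀ F ∈ get_offending_flows (getACS M) V
            (E ∪ {x | x ∈ e :: a} ∪ backflows {x | x ∈ e :: a}),
          F ⊆ backflows {x | x ∈ e :: a}
    then filterACS V E M (e :: a) es
    else filterACS V E M a es

namespace Stmt15Aux

variable {β : Type*}

lemma backflows_mono {X Y : Set (β × β)} (h : X ⊆ Y) : backflows X ⊆ backflows Y :=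
  fun _ hx => h hx

lemma backflows_empty : backflows (∅ : Set (β × β)) = ∅ := by
  ext x; simp [backflows]

lemma mem_backflows {X : Set (β × β)} {x : β × β} : x ∈ backflows X ↔ (x.2, x.1) ∈ X :=
  Iff.rfl

lemma backflows_finite {X : Set (β × β)} (h : X.Finite) : (backflows X).Finite := by
  have : backflows X = Prod.swap '' X := by
    ext ⟨a, b⟩
    simp only [backflows, Set.mem_setOf_eq, Set.mem_image, Prod.exists, Prod.swap_prod_mk,
      Prod.mk.injEq]
    constructor
    · intro hx; exact ⟨b, a, hx, rfl, rfl⟩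
    · rintro ⟨c, d, hc, rfl, rfl⟩; exact hc
  rw [this]; exact h.image _

/-- shrink lemma: a bound on all offending flows survives removing a finite set of edges. -/
lemma shrink {m : Set β → Set (β × β) → Prop} {V : Set β} {E' Y X : Set (β × β)}
    (hmono : ∀ E₁ E₂ : Set (β × β), m V E₁ → E₂ ⊆ E₁ → m V E₂)
    (hY : Y.Finite)
    (hX : ∀ F ∈ offending_flows m V E', F ⊆ X) :
    ∀ F ∈ offending_flows m V (E' \ Y), F ⊆ X := by
  intro F hF
  obtain ⟨hFsub, hnot, hholds, hmin⟩ := hF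
  set s : Set (Set (β × β)) := {Z | Z ⊆ Y ∧ m V (E' \ (F ∪ Z))} with hs
  have hYs : Y ∈ s := by
    refine ⟨subset_rfl, ?_⟩
    have hEq : E' \ (F ∪ Y) = (E' \ Y) \ F := by
      ext x; simp only [Set.mem_diff, Set.mem_union]; tauto
    rw [hEq]; exact hholds
  have hsfin : s.Finite := hY.finite_subsets.subset (fun Z hZ => hZ.1)
  obtain ⟨Z, hZs, hZmin⟩ : ∃ Z ∈ s, ∀ Z' ∈ s, id Z' ≤ id Z → id Z = id Z' := by
    obtain ⟨Z, hZs, hZmin⟩ := hsfin.exists_minimalFor id s ⟨Y, hYs⟩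
    exact ⟨Z, hZs, fun Z' hZ' hle => le_antisymm (hZmin hZ' hle) hle⟩
  have hZY : Z ⊆ Y := hZs.1
  have hZm : m V (E' \ (F ∪ Z)) := hZs.2
  have hFY : ∀ x ∈ F, x ∉ Y := fun x hx => (hFsub hx).2
  have hZE : Z ⊆ E' := by
    intro z hz
    by_contra hzE
    have heq : E' \ (F ∪ (Z \ {z})) = E' \ (F ∪ Z) := by
      ext x
      simp only [Set.mem_diff, Set.mem_union, Set.mem_singleton_iff]
      constructor
      · rintro ⟨hxE, hx⟩
        refine ⟨hxE, fun hc => hx ?_⟩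
        rcases hc with h1 | h1
        · exact Or.inl h1
        · exact Or.inr ⟨h1, fun hxz => hzE (hxz ▸ hxE)⟩
      · rintro ⟨hxE, hx⟩
        exact ⟨hxE, fun hc => hx (by tauto)⟩
    have hmem : Z \ {z} ∈ s := ⟨(Set.diff_subset).trans hZY, by rw [heq]; exact hZm⟩
    have := hZmin _ hmem (Set.diff_subset)
    simp only [id] at this
    have : z ∈ Z \ {z} := this ▸ hz
    exact this.2 rfl
  have hFE : F ⊆ E' := fun x hx => (hFsub hx).1
  have hFZ : ∀ x ∈ F, x ∉ Z := fun x hx hz => hFY x hx (hZY hz)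
  have hoff : F ∪ Z ∈ offending_flows m V E' := by
    refine ⟨Set.union_subset hFE hZE, ?_, hZm, ?_⟩
    · intro hmE'
      exact hnot (hmono _ _ hmE' Set.diff_subset)
    · intro w hw hmw
      rcases hw with hwF | hwZ
      · -- ¬ m on ((E'\Y)\F ∪ {w}) and it's a subset of (E'\(F∪Z)) ∪ {w}
        refine hmin w hwF (hmono _ _ hmw ?_)
        intro x hx
        rcases hx with ⟨⟨hxE, hxY⟩, hxF⟩ | hx
        · exact Or.inl ⟨hxE, fun hc => by
            rcases hc with h1 | h1
            · exact hxF h1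
            · exact hxY (hZY h1)⟩
        · exact Or.inr hx
      · -- w ∈ Z: contradicts minimality of Z
        have hwE : w ∈ E' := hZE hwZ
        have hwF : w ∉ F := fun hc => hFZ w hc hwZ
        have heq : E' \ (F ∪ (Z \ {w})) = (E' \ (F ∪ Z)) ∪ {w} := by
          ext x
          simp only [Set.mem_diff, Set.mem_union, Set.mem_singleton_iff]
          constructor
          · rintro ⟨hxE, hx⟩
            by_cases hxw : x = w
            · exact Or.inr hxw
            · exact Or.inl ⟨hxE, fun hc => hx (by tauto)⟩
          · rintro (⟨hxE, hx⟩ | rfl)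
            · exact ⟨hxE, by tauto⟩
            · exact ⟨hwE, fun hc => by
                rcases hc with h1 | h1
                · exact hwF h1
                · exact h1.2 rfl⟩
        have hmem : Z \ {w} ∈ s := ⟨Set.diff_subset.trans hZY, by rw [heq]; exact hmw⟩
        have := hZmin _ hmem Set.diff_subset
        simp only [id] at this
        have : w ∈ Z \ {w} := this ▸ hwZ
        exact this.2 rfl
  exact fun x hx => hX _ hoff (Or.inl hx)

variable {V : Set β} {E : Set (β × β)} {M : Set (SecurityInvariant β)}

lemma filterIFS_sound (es : List (β × β)) :
    ∀ a : List (β × β),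
      (∀ m ∈ getIFS M, m V (E ∪ {x | x ∈ a} ∪ backflows {x | x ∈ a})) →
      ∀ m ∈ getIFS M,
        m V (E ∪ {x | x ∈ filterIFS V E M a es} ∪ backflows {x | x ∈ filterIFS V E M a es}) := by
  induction es with
  | nil => intro a h; rw [filterIFS]; exact h
  | cons e es ih =>
    intro a h
    rw [filterIFS]
    split
    · next hc => exact ih _ hc
    · exact ih _ h

lemma filterACS_sound (es : List (β × β)) :
    ∀ a : List (β × β),
      (∀ F ∈ get_offending_flows (getACS M) V (E ∪ {x | x ∈ a} ∪ backflows {x | x ∈ a}),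
          F ⊆ backflows {x | x ∈ a}) →
      ∀ F ∈ get_offending_flows (getACS M) V
          (E ∪ {x | x ∈ filterACS V E M a es} ∪ backflows {x | x ∈ filterACS V E M a es}),
        F ⊆ backflows {x | x ∈ filterACS V E M a es} := by
  induction es with
  | nil => intro a h; rw [filterACS]; exact h
  | cons e es ih =>
    intro a h
    rw [filterACS]
    split
    · next hc => exact ih _ hc.2
    · exact ih _ h

lemma filterACS_mem (es : List (β × β)) :
    ∀ a : List (β × β), ∀ x ∈ filterACS V E M a es, x ∈ a ∨ x ∈ es := by
  induction es with
  | nil => intro a x hx; rw [filterACS] at hx; exact Or.inl hx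
  | cons e es ih =>
    intro a x hx
    rw [filterACS] at hx
    split at hx
    · rcases ih _ x hx with h | h
      · rcases List.mem_cons.mp h with rfl | h
        · exact Or.inr List.mem_cons_self
        · exact Or.inl h
      · exact Or.inr (List.mem_cons_of_mem _ h)
    · rcases ih _ x hx with h | h
      · exact Or.inl h
      · exact Or.inr (List.mem_cons_of_mem _ h)

lemma filterACS_nbf (es : List (β × β)) :
    ∀ a : List (β × β), (∀ x ∈ a, x ∉ backflows E) →
      ∀ x ∈ filterACS V E M a es, x ∉ backflows E := by
  induction es with
  | nil => intro a h x hx; rw [filterACS] at hx; exact h x hx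
  | cons e es ih =>
    intro a h x hx
    rw [filterACS] at hx
    split at hx
    · next hc =>
      refine ih _ ?_ x hx
      intro y hy
      rcases List.mem_cons.mp hy with rfl | hy
      · exact hc.1
      · exact h y hy
    · exact ih _ h x hx

end Stmt15Aux

theorem stmt_15 {α : Type*} (M : Set (SecurityInvariant α))
    (V : Set α) (E : Set (α × α)) (e : List (α × α))
    (h_empty : ∀ m ∈ M, ∀ V' : Set α, m.pred V' ∅)
    (h_mono : ∀ m ∈ M, ∀ (V' : Set α) (E₁ E₂ : Set (α × α)),
        m.pred V' E₁ → E₂ ⊆ E₁ → m.pred V' E₂)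
    (h_valid : ∀ m ∈ M, m.pred V E)
    (he : ∀ x ∈ e, x ∈ E) :
    (∀ m ∈ getIFS M,
      m V (E ∪ ({x | x ∈ filterACS V E M [] e} ∩ {x | x ∈ filterIFS V E M [] e}) ∪
        backflows ({x | x ∈ filterACS V E M [] e} ∩ {x | x ∈ filterIFS V E M [] e}))) ∧
    (⋃₀ get_offending_flows (getACS M) V
        (E ∪ ({x | x ∈ filterACS V E M [] e} ∩ {x | x ∈ filterIFS V E M [] e}) ∪
          backflows ({x | x ∈ filterACS V E M [] e} ∩ {x | x ∈ filterIFS V E M [] e})) ⊆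
      backflows ({x | x ∈ filterACS V E M [] e} ∩ {x | x ∈ filterIFS V E M [] e}) \ E) := by
  classical
  obtain ⟨hIFS_valid, hIFS_mono⟩ :
      (∀ m ∈ getIFS M, m V E) ∧
      (∀ m ∈ getIFS M, ∀ (E₁ E₂ : Set (α × α)), m V E₁ → E₂ ⊆ E₁ → m V E₂) := by
    constructor
    · rintro m ⟨m', hm', -, rfl⟩; exact h_valid m' hm'
    · rintro m ⟨m', hm', -, rfl⟩; exact h_mono m' hm' V
  obtain ⟨hACS_valid, hACS_mono⟩ :
      (∀ m ∈ getACS M, m V E) ∧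
      (∀ m ∈ getACS M, ∀ (E₁ E₂ : Set (α × α)), m V E₁ → E₂ ⊆ E₁ → m V E₂) := by
    constructor
    · rintro m ⟨m', hm', -, rfl⟩; exact h_valid m' hm'
    · rintro m ⟨m', hm', -, rfl⟩; exact h_mono m' hm' V
  set A := filterACS V E M [] e with hA
  set I := filterIFS V E M [] e with hI
  set S : Set (α × α) := {x | x ∈ A} ∩ {x | x ∈ I} with hS
  have hbase_set : (E ∪ {x | x ∈ ([] : List (α × α))} ∪ backflows {x | x ∈ ([] : List (α × α))}) = E := by
    have h0 : {x | x ∈ ([] : List (α × α))} = (∅ : Set (α × α)) := by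
      ext x; simp
    rw [h0, Stmt15Aux.backflows_empty, Set.union_empty, Set.union_empty]
  -- membership facts for A
  have hA_E : ∀ x ∈ A, x ∈ E := by
    intro x hx
    rcases Stmt15Aux.filterACS_mem e [] x hx with h | h
    · simp at h
    · exact he x h
  have hA_nbf : ∀ x ∈ A, x ∉ backflows E :=
    Stmt15Aux.filterACS_nbf e [] (by intro x hx; simp at hx)
  have hS_A : S ⊆ {x | x ∈ A} := Set.inter_subset_left
  have hS_I : S ⊆ {x | x ∈ I} := Set.inter_subset_right
  have hS_E : S ⊆ E := fun x hx => hA_E x (hS_A hx)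
  constructor
  · -- IFS part
    intro m hm
    have hIbig : m V (E ∪ {x | x ∈ I} ∪ backflows {x | x ∈ I}) := by
      refine Stmt15Aux.filterIFS_sound e [] ?_ m hm
      intro m' hm'
      rw [hbase_set]
      exact hIFS_valid m' hm'
    refine hIFS_mono m hm _ _ hIbig ?_
    refine Set.union_subset_union (Set.union_subset_union subset_rfl hS_I)
      (Stmt15Aux.backflows_mono hS_I)
  · -- ACS part
    have hAbig : ∀ F ∈ get_offending_flows (getACS M) V
        (E ∪ {x | x ∈ A} ∪ backflows {x | x ∈ A}), F ⊆ backflows {x | x ∈ A} := by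
      refine Stmt15Aux.filterACS_sound e [] ?_
      intro F hF
      rw [hbase_set] at hF
      obtain ⟨m, hm, hFm⟩ := by simpa [get_offending_flows, Set.mem_iUnion] using hF
      exact absurd (hACS_valid m hm) hFm.2.1
    set EA : Set (α × α) := E ∪ {x | x ∈ A} ∪ backflows {x | x ∈ A} with hEA
    set ES : Set (α × α) := E ∪ S ∪ backflows S with hES
    have hsub : ES ⊆ EA := by
      refine Set.union_subset_union (Set.union_subset_union subset_rfl hS_A)
        (Stmt15Aux.backflows_mono hS_A)
    have heq : EA \ (EA \ ES) = ES := by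
      rw [Set.diff_diff_right_self]
      exact Set.inter_eq_right.mpr hsub
    have hYfin : (EA \ ES).Finite := by
      refine Set.Finite.subset (Set.Finite.union (A.finite_toSet)
        (Stmt15Aux.backflows_finite A.finite_toSet)) ?_
      intro x hx
      rcases hx.1 with (hxE | hxA) | hxbf
      · exact absurd (Or.inl (Or.inl hxE)) hx.2
      · exact Or.inl hxA
      · exact Or.inr hxbf
    -- every offending flow at ES is contained in backflows {x ∈ A}
    have hbound : ∀ F ∈ get_offending_flows (getACS M) V ES, F ⊆ backflows {x | x ∈ A} := by
      intro F hF
      obtain ⟨m, hm, hFm⟩ := by simpa [get_offending_flows, Set.mem_iUnion] using hF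
      rw [← heq] at hFm
      exact Stmt15Aux.shrink (hACS_mono m hm) hYfin
        (fun F' hF' => hAbig F' (Set.mem_biUnion hm hF')) F hFm
    intro x hx
    obtain ⟨F, hF, hxF⟩ := hx
    have hxbfA : x ∈ backflows {x | x ∈ A} := hbound F hF hxF
    have hFES : F ⊆ ES := by
      obtain ⟨m, hm, hFm⟩ := by simpa [get_offending_flows, Set.mem_iUnion] using hF
      exact hFm.1
    have hxE : x ∉ E := by
      intro hxE
      have hswap : (x.2, x.1) ∈ A := hxbfA
      exact hA_nbf _ hswap hxE
    have hxES : x ∈ ES := hFES hxF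
    refine ⟨?_, hxE⟩
    rcases hxES with (hxE' | hxS) | hxbf
    · exact absurd hxE' hxE
    · exact absurd (hS_E hxS) hxE
    · exact hxbf
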